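/- Let p, r, t be real numbers with 0 < r − t, r ≤ p < 1 and t > 0, let n_r and n_p be positive integers, and set n = n_r + n_p. Then Σ over all pairs of integers (i_r, i_p) with 0 ≤ i_r ≤ n_r, 0 ≤ i_p ≤ n_p and i_r + i_p ≤ (r − t)·n of C(n_p, i_p)·C(n_r, i_r)·p^{i_p}·(1−p)^{n_p−i_p}·r^{i_r}·(1−r)^{n_r−i_r} is at most e^{−2t²n}. -/

import Mathlib

open scoped Classical

-- Hoeffding's lemma for a Bernoulli variable
-- Hoeffding's lemma for Bernoulli: q e^u + (1-q) ≤ exp(q u + u²/8)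
lemma bern_hoeffding (q : ℝ) (hq0 : 0 ≤ q) (hq1 : q ≤ 1) (u : ℝ) :
    q * Real.exp u + (1 - q) ≤ Real.exp (q * u + u ^ 2 / 8) := by
  set D : ℝ → ℝ := fun x => q * Real.exp x + (1 - q) with hD
  have hDpos : ∀ x, 0 < D x := by
    intro x
    rcases lt_or_eq_of_le hq1 with h | h
    · have : 0 ≤ q * Real.exp x := mul_nonneg hq0 (Real.exp_pos x).le
      simp only [hD]; linarith
    · simp only [hD, ← h]
      have := Real.exp_pos x
      nlinarith [Real.exp_pos x]
  -- G is derivative of g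
  set G : ℝ → ℝ := fun x => q + x / 4 - q * Real.exp x / D x with hG
  set g : ℝ → ℝ := fun x => q * x + x ^ 2 / 8 - Real.log (D x) with hg
  have hDder : ∀ x, HasDerivAt D (q * Real.exp x) x := by
    intro x
    exact ((Real.hasDerivAt_exp x).const_mul q).add_const (1 - q)
  have hgder : ∀ x, HasDerivAt g (G x) x := by
    intro x
    have h1 : HasDerivAt (fun x => q * x + x ^ 2 / 8) (q + x / 4) x := by
      have := ((hasDerivAt_pow 2 x).div_const 8).const_add (q * x)
      have h2 : HasDerivAt (fun y : ℝ => q * y) q x := by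
        simpa using (hasDerivAt_id x).const_mul q
      have := h2.add ((hasDerivAt_pow 2 x).div_const 8)
      refine this.congr_deriv ?_
      ring
    have h3 : HasDerivAt (fun x => Real.log (D x)) (q * Real.exp x / D x) x :=
      (hDder x).log (hDpos x).ne'
    exact h1.sub h3
  have hGder : ∀ x, HasDerivAt G (1 / 4 - q * Real.exp x * (1 - q) / (D x) ^ 2) x := by
    intro x
    have h1 : HasDerivAt (fun x => q + x / 4) (1 / 4) x := by
      simpa using ((hasDerivAt_id x).div_const 4).const_add q
    have h2 : HasDerivAt (fun x => q * Real.exp x) (q * Real.exp x) x :=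
      (Real.hasDerivAt_exp x).const_mul q
    have h3 := h2.div (hDder x) (hDpos x).ne'
    have := h1.sub h3
    refine this.congr_deriv ?_
    have : q * Real.exp x * D x - q * Real.exp x * (q * Real.exp x)
        = q * Real.exp x * (1 - q) := by simp only [hD]; ring
    rw [this]
  have hG0 : G 0 = 0 := by simp [hG, hD]
  have hGmono : Monotone G := by
    apply monotone_of_deriv_nonneg
    · exact fun x => (hGder x).differentiableAt
    · intro x
      rw [(hGder x).deriv]
      have hDx := hDpos x
      rw [sub_nonneg, div_le_iff₀ (pow_pos hDx 2)]
      simp only [hD] at hDx ⊢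
      nlinarith [sq_nonneg (q * Real.exp x - (1 - q)), Real.exp_pos x]
  have hgmin : ∀ x, 0 ≤ g x := by
    intro x
    have hg0 : g 0 = 0 := by simp [hg, hD]
    rcases le_or_gt 0 x with h | h
    · -- g monotone on [0, ∞)
      have : MonotoneOn g (Set.Ici 0) := by
        apply monotoneOn_of_deriv_nonneg (convex_Ici 0)
          (Differentiable.continuous (fun y => (hgder y).differentiableAt)).continuousOn
        · intro y hy
          exact (hgder y).differentiableAt.differentiableWithinAt
        · intro y hy
          rw [(hgder y).deriv]
          have hy' : (0:ℝ) < y := by simpa [interior_Ici] using hy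
          have : G 0 ≤ G y := hGmono hy'.le
          linarith [hG0 ▸ this]
      have := this (Set.mem_Ici.mpr le_rfl) (Set.mem_Ici.mpr h) h
      linarith [hg0 ▸ this]
    · have : AntitoneOn g (Set.Iic 0) := by
        apply antitoneOn_of_deriv_nonpos (convex_Iic 0)
          (Differentiable.continuous (fun y => (hgder y).differentiableAt)).continuousOn
        · intro y hy
          exact (hgder y).differentiableAt.differentiableWithinAt
        · intro y hy
          rw [(hgder y).deriv]
          have hy' : y < (0:ℝ) := by simpa [interior_Iic] using hy
          have : G y ≤ G 0 := hGmono hy'.le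
          linarith [hG0 ▸ this]
      have := this (Set.mem_Iic.mpr h.le) (Set.mem_Iic.mpr le_rfl) h.le
      linarith [hg0 ▸ this]
  have := hgmin u
  have hlog : Real.log (D u) ≤ q * u + u ^ 2 / 8 := by simp only [hg] at this; linarith
  calc D u = Real.exp (Real.log (D u)) := (Real.exp_log (hDpos u)).symm
    _ ≤ Real.exp (q * u + u ^ 2 / 8) := Real.exp_le_exp.mpr hlog

/-- lower tail bound for a sum of two binomial distributions.
For `0 < r − t`, `r ≤ p < 1`, `t > 0` and `n = n_r + n_p`,
`Σ_{i_r + i_p ≤ (r−t)n} C(n_p,i_p) C(n_r,i_r) p^{i_p}(1−p)^{n_p−i_p} r^{i_r}(1−r)^{n_r−i_r}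
  ≤ e^{−2t²n}`. -/
theorem stmt15 (p r t : ℝ) (hrt : 0 < r - t) (hrp : r ≤ p) (hp1 : p < 1) (ht : 0 < t)
    (nr np : ℕ) (hnr : 0 < nr) (hnp : 0 < np) :
    ∑ x ∈ (Finset.range (nr + 1) ×ˢ Finset.range (np + 1)).filter
        (fun x => (x.1 : ℝ) + (x.2 : ℝ) ≤ (r - t) * ((nr : ℝ) + np)),
      (np.choose x.2 : ℝ) * (nr.choose x.1 : ℝ) *
        p ^ x.2 * (1 - p) ^ (np - x.2) * r ^ x.1 * (1 - r) ^ (nr - x.1)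
    ≤ Real.exp (-2 * t ^ 2 * ((nr : ℝ) + np)) := by
  set n : ℝ := (nr : ℝ) + np with hn
  set u : ℝ := 4 * t with hu
  have hu0 : 0 < u := by positivity
  have hr0 : 0 < r := by linarith
  have hr1 : r < 1 := lt_of_le_of_lt hrp hp1
  have hp0 : 0 < p := lt_of_lt_of_le hr0 hrp
  set F : ℕ × ℕ → ℝ := fun x => (np.choose x.2 : ℝ) * (nr.choose x.1 : ℝ) *
        p ^ x.2 * (1 - p) ^ (np - x.2) * r ^ x.1 * (1 - r) ^ (nr - x.1) with hF
  have hFnn : ∀ x : ℕ × ℕ, 0 ≤ F x := by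
    intro x
    have h1 : (0:ℝ) ≤ 1 - p := by linarith
    have h2 : (0:ℝ) ≤ 1 - r := by linarith
    simp only [hF]
    positivity
  set grid := Finset.range (nr + 1) ×ˢ Finset.range (np + 1) with hgrid
  -- step 1: insert exponential weights
  have step1 : ∑ x ∈ grid.filter (fun x => (x.1 : ℝ) + (x.2 : ℝ) ≤ (r - t) * n), F x
      ≤ ∑ x ∈ grid, F x * Real.exp (u * ((r - t) * n - ((x.1 : ℝ) + x.2))) := by
    calc ∑ x ∈ grid.filter (fun x => (x.1 : ℝ) + (x.2 : ℝ) ≤ (r - t) * n), F x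
        ≤ ∑ x ∈ grid.filter (fun x => (x.1 : ℝ) + (x.2 : ℝ) ≤ (r - t) * n),
            F x * Real.exp (u * ((r - t) * n - ((x.1 : ℝ) + x.2))) := by
          apply Finset.sum_le_sum
          intro x hx
          have hx' := (Finset.mem_filter.mp hx).2
          have h1 : (1:ℝ) ≤ Real.exp (u * ((r - t) * n - ((x.1 : ℝ) + x.2))) := by
            rw [Real.one_le_exp_iff]
            have : (0:ℝ) ≤ (r - t) * n - ((x.1 : ℝ) + x.2) := by linarith
            positivity
          nlinarith [hFnn x]
      _ ≤ ∑ x ∈ grid, F x * Real.exp (u * ((r - t) * n - ((x.1 : ℝ) + x.2))) := by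
          apply Finset.sum_le_sum_of_subset_of_nonneg (Finset.filter_subset _ _)
          intro x _ _
          exact mul_nonneg (hFnn x) (Real.exp_pos _).le
  -- per-term factorization
  have key : ∀ x : ℕ × ℕ, F x * Real.exp (u * ((r - t) * n - ((x.1 : ℝ) + x.2)))
      = Real.exp (u * (r - t) * n) *
        ((r * Real.exp (-u)) ^ x.1 * (1 - r) ^ (nr - x.1) * (nr.choose x.1 : ℝ)) *
        ((p * Real.exp (-u)) ^ x.2 * (1 - p) ^ (np - x.2) * (np.choose x.2 : ℝ)) := by
    intro x
    rw [mul_pow, mul_pow, ← Real.exp_nat_mul, ← Real.exp_nat_mul]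
    rw [show u * ((r - t) * n - ((x.1 : ℝ) + x.2))
        = u * (r - t) * n + (x.1 : ℝ) * (-u) + (x.2 : ℝ) * (-u) by ring]
    rw [Real.exp_add, Real.exp_add]
    simp only [hF]
    ring
  -- step 2: factor into binomial sums
  have step2 : ∑ x ∈ grid, F x * Real.exp (u * ((r - t) * n - ((x.1 : ℝ) + x.2)))
      = Real.exp (u * (r - t) * n) * (r * Real.exp (-u) + (1 - r)) ^ nr *
          (p * Real.exp (-u) + (1 - p)) ^ np := by
    rw [Finset.sum_congr rfl (fun x _ => key x), hgrid, Finset.sum_product, add_pow, add_pow,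
      mul_assoc (Real.exp (u * (r - t) * n)), Finset.sum_mul_sum, Finset.mul_sum]
    refine Finset.sum_congr rfl fun x _ => ?_
    rw [Finset.mul_sum]
    exact Finset.sum_congr rfl fun y _ => by ring
  -- step 3: bound the binomial bases
  have hbase_r : (0:ℝ) ≤ r * Real.exp (-u) + (1 - r) := by
    have := Real.exp_pos (-u); nlinarith
  have hbase_p : (0:ℝ) ≤ p * Real.exp (-u) + (1 - p) := by
    have := Real.exp_pos (-u); nlinarith
  have hBr : (r * Real.exp (-u) + (1 - r)) ^ nr ≤ Real.exp ((nr : ℝ) * (r * (-u) + u ^ 2 / 8)) := by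
    calc (r * Real.exp (-u) + (1 - r)) ^ nr
        ≤ Real.exp (r * (-u) + (-u) ^ 2 / 8) ^ nr := by
          apply pow_le_pow_left₀ hbase_r (bern_hoeffding r hr0.le hr1.le (-u))
      _ = Real.exp ((nr : ℝ) * (r * (-u) + u ^ 2 / 8)) := by
          rw [← Real.exp_nat_mul]; ring_nf
  have hBp : (p * Real.exp (-u) + (1 - p)) ^ np ≤ Real.exp ((np : ℝ) * (p * (-u) + u ^ 2 / 8)) := by
    calc (p * Real.exp (-u) + (1 - p)) ^ np
        ≤ Real.exp (p * (-u) + (-u) ^ 2 / 8) ^ np := by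
          apply pow_le_pow_left₀ hbase_p (bern_hoeffding p hp0.le hp1.le (-u))
      _ = Real.exp ((np : ℝ) * (p * (-u) + u ^ 2 / 8)) := by
          rw [← Real.exp_nat_mul]; ring_nf
  -- combine
  calc ∑ x ∈ grid.filter (fun x => (x.1 : ℝ) + (x.2 : ℝ) ≤ (r - t) * n), F x
      ≤ Real.exp (u * (r - t) * n) * (r * Real.exp (-u) + (1 - r)) ^ nr *
          (p * Real.exp (-u) + (1 - p)) ^ np := by rw [← step2]; exact step1
    _ ≤ Real.exp (u * (r - t) * n) * Real.exp ((nr : ℝ) * (r * (-u) + u ^ 2 / 8)) *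
          Real.exp ((np : ℝ) * (p * (-u) + u ^ 2 / 8)) := by
        have e1 := Real.exp_pos (u * (r - t) * n)
        have e2 := Real.exp_pos ((nr : ℝ) * (r * (-u) + u ^ 2 / 8))
        apply mul_le_mul _ hBp (pow_nonneg hbase_p np) (by positivity)
        exact mul_le_mul_of_nonneg_left hBr e1.le
    _ = Real.exp (u * (r - t) * n + (nr : ℝ) * (r * (-u) + u ^ 2 / 8)
          + (np : ℝ) * (p * (-u) + u ^ 2 / 8)) := by
        rw [← Real.exp_add, ← Real.exp_add]
    _ ≤ Real.exp (-2 * t ^ 2 * n) := by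
        apply Real.exp_le_exp.mpr
        have hnr' : (0:ℝ) ≤ (nr : ℝ) := Nat.cast_nonneg nr
        have hnp' : (0:ℝ) ≤ (np : ℝ) := Nat.cast_nonneg np
        have hpu : (np : ℝ) * (p * -(4*t)) ≤ (np : ℝ) * (r * -(4*t)) := by
          apply mul_le_mul_of_nonneg_left _ hnp'
          nlinarith
        rw [hn, hu]
        nlinarith [hpu]
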